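/- Let Q* be a fixed point of the Bellman operator F, let π* be a greedy policy with respect to Q*, let ε > 0 satisfy γ + ε < 1, and let M = Σ_{k=0}^∞ (γ+ε)^{−2k} (A_{π*}ᵏ)ᵀ A_{π*}ᵏ. If Q₀ ≤ Q* entrywise, then for every k ≥ 0 the value iteration iterates Q_k = F^k Q₀ satisfy ‖Q_k − Q*‖_M ≤ (γ+ε)^k ‖Q₀ − Q*‖_M, where ‖x‖_M = √(xᵀ M x). -/

import Mathlib

open Finset Matrix

/-- The Bellman operator `F` for a discounted MDP:
`(F Q)(s,a) = R(s,a) + γ * Σ_{s'} P(s'|s,a) * max_{a'} Q(s',a')`. -/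
noncomputable def bellman {S A : Type*} [Fintype S] [Fintype A] [Nonempty A]
    (γ : ℝ) (P : S → A → S → ℝ) (R : S → A → ℝ) (Q : S × A → ℝ) : S × A → ℝ :=
  fun p =>
    R p.1 p.2 +
      γ * ∑ s' : S, P p.1 p.2 s' * Finset.univ.sup' Finset.univ_nonempty (fun a' => Q (s', a'))

/-- The matrix of the linear map `A_π` on `ℝ^{S×A}` associated with a deterministic
policy `π : S → A`: `(A_π x)(s,a) = γ * Σ_{s'} P(s'|s,a) * x(s', π(s'))`.
Its entry at row `(s,a)`, column `(s',a')` is `γ * P(s'|s,a)` if `a' = π s'`, else `0`. -/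
noncomputable def polMat {S A : Type*} [Fintype S] [Fintype A] [DecidableEq A]
    (γ : ℝ) (P : S → A → S → ℝ) (π : S → A) : Matrix (S × A) (S × A) ℝ :=
  Matrix.of fun p q => if q.2 = π q.1 then γ * P p.1 p.2 q.1 else 0

/-- Comparison with a geometric series. -/
lemma aux_summable_ratio {c r : ℝ} (hr0 : 0 ≤ r) (hr1 : r < 1) (f : ℕ → ℝ)
    (h0 : ∀ k, 0 ≤ f k) (hle : ∀ k, f k ≤ c * r ^ k) : Summable f :=
  Summable.of_nonneg_of_le h0 hle ((summable_geometric_of_lt_one hr0 hr1).mul_left c)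

/-- Monotonicity of squared euclidean dot product on the nonnegative orthant. -/
lemma aux_dot_sq_mono {n : Type*} [Fintype n] {u v : n → ℝ}
    (hu : ∀ p, 0 ≤ u p) (huv : ∀ p, u p ≤ v p) : u ⬝ᵥ u ≤ v ⬝ᵥ v := by
  simp only [dotProduct]
  exact Finset.sum_le_sum fun p _ =>
    mul_le_mul (huv p) (huv p) (hu p) ((hu p).trans (huv p))

theorem stmt14 {S A : Type*} [Fintype S] [Fintype A] [Nonempty S] [Nonempty A]
    [DecidableEq S] [DecidableEq A]
    (γ ε : ℝ) (hγ0 : 0 ≤ γ) (hγ1 : γ < 1) (hε : 0 < ε) (hγε : γ + ε < 1)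
    (P : S → A → S → ℝ) (hP0 : ∀ s a s', 0 ≤ P s a s')
    (hP1 : ∀ s a, ∑ s' : S, P s a s' = 1)
    (R : S → A → ℝ)
    (Qstar : S × A → ℝ) (hfix : bellman γ P R Qstar = Qstar)
    (πstar : S → A)
    (hgreedy : ∀ s : S,
      Qstar (s, πstar s) = Finset.univ.sup' Finset.univ_nonempty (fun a => Qstar (s, a)))
    (M : Matrix (S × A) (S × A) ℝ)
    (hM : M = ∑' k : ℕ,
      ((γ + ε)⁻¹ ^ (2 * k)) • ((polMat γ P πstar ^ k)ᵀ * polMat γ P πstar ^ k))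
    (Q₀ : S × A → ℝ) (hQ₀ : Q₀ ≤ Qstar) :
    ∀ k : ℕ,
      Real.sqrt (((bellman γ P R)^[k] Q₀ - Qstar) ⬝ᵥ
          M.mulVec ((bellman γ P R)^[k] Q₀ - Qstar)) ≤
        (γ + ε) ^ k * Real.sqrt ((Q₀ - Qstar) ⬝ᵥ M.mulVec (Q₀ - Qstar)) := by
  set β : ℝ := γ + ε with hβdef
  have hβ0 : 0 < β := by positivity
  have hγβ : γ < β := by simp only [hβdef]; linarith
  set B : Matrix (S × A) (S × A) ℝ := polMat γ P πstar with hBdef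
  -- basic facts about B and its powers
  have hB0 : ∀ p q : S × A, 0 ≤ B p q := by
    intro p q
    simp only [hBdef, polMat, Matrix.of_apply]
    split
    · exact mul_nonneg hγ0 (hP0 _ _ _)
    · exact le_refl 0
  have hBrow : ∀ p : S × A, ∑ q : S × A, B p q = γ := by
    intro p
    simp only [hBdef, polMat, Matrix.of_apply]
    rw [Fintype.sum_prod_type]
    have : ∀ s' : S, (∑ a' : A, if a' = πstar s' then γ * P p.1 p.2 s' else 0)
        = γ * P p.1 p.2 s' := by
      intro s'
      rw [Finset.sum_ite_eq' Finset.univ (πstar s') (fun _ => γ * P p.1 p.2 s')]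
      simp
    simp_rw [this]
    rw [← Finset.mul_sum, hP1]
    ring
  have hBk : ∀ k : ℕ, (∀ p q : S × A, 0 ≤ (B ^ k) p q) ∧
      (∀ p : S × A, ∑ q : S × A, (B ^ k) p q = γ ^ k) := by
    intro k
    induction k with
    | zero =>
      constructor
      · intro p q; simp [Matrix.one_apply]; split <;> norm_num
      · intro p; simp [Matrix.one_apply]
    | succ n ih =>
      constructor
      · intro p q
        rw [pow_succ, Matrix.mul_apply]
        exact Finset.sum_nonneg fun r _ => mul_nonneg (ih.1 p r) (hB0 r q)
      · intro p
        simp_rw [pow_succ, Matrix.mul_apply]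
        rw [Finset.sum_comm]
        simp_rw [← Finset.mul_sum, hBrow]
        rw [← Finset.sum_mul, ih.2]
  have hBent : ∀ (k : ℕ) (p q : S × A), (B ^ k) p q ≤ γ ^ k := by
    intro k p q
    calc (B ^ k) p q ≤ ∑ q' : S × A, (B ^ k) p q' :=
          Finset.single_le_sum (fun q' _ => (hBk k).1 p q') (Finset.mem_univ q)
      _ = γ ^ k := (hBk k).2 p
  -- bound on mulVec of powers
  have hmvb : ∀ (x : S × A → ℝ) (k : ℕ) (p : S × A),
      |((B ^ k).mulVec x) p| ≤ γ ^ k * ∑ q : S × A, |x q| := by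
    intro x k p
    have h1 : ((B ^ k).mulVec x) p = ∑ q : S × A, (B ^ k) p q * x q := by
      simp [Matrix.mulVec, dotProduct]
    rw [h1]
    calc |∑ q : S × A, (B ^ k) p q * x q| ≤ ∑ q : S × A, |(B ^ k) p q * x q| :=
          Finset.abs_sum_le_sum_abs _ _
      _ = ∑ q : S × A, (B ^ k) p q * |x q| := by
          refine Finset.sum_congr rfl fun q _ => ?_
          rw [abs_mul, abs_of_nonneg ((hBk k).1 p q)]
      _ ≤ ∑ q : S × A, γ ^ k * |x q| :=
          Finset.sum_le_sum fun q _ => mul_le_mul_of_nonneg_right (hBent k p q) (abs_nonneg _)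
      _ = γ ^ k * ∑ q : S × A, |x q| := by rw [Finset.mul_sum]
  -- ratio
  set r : ℝ := (γ * β⁻¹) ^ 2 with hrdef
  have ht0 : 0 ≤ γ * β⁻¹ := mul_nonneg hγ0 (inv_nonneg.2 hβ0.le)
  have ht1 : γ * β⁻¹ < 1 := by
    rw [mul_inv_lt_iff₀ hβ0, one_mul]; exact hγβ
  have hr0 : 0 ≤ r := by positivity
  have hr1 : r < 1 := by nlinarith
  have hkey : ∀ k : ℕ, β⁻¹ ^ (2 * k) * (γ ^ k * γ ^ k) = r ^ k := by
    intro k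
    rw [hrdef, ← pow_mul, mul_pow, mul_comm 2 k, pow_mul, pow_mul,
      show γ ^ k * γ ^ k = (γ ^ k) ^ 2 from (sq _).symm]
    ring
  -- summability of the quadratic-form series
  have hg0 : ∀ (x : S × A → ℝ) (j : ℕ),
      0 ≤ β⁻¹ ^ (2 * j) * ((B ^ j).mulVec x ⬝ᵥ (B ^ j).mulVec x) := by
    intro x j
    apply mul_nonneg (by positivity)
    exact Finset.sum_nonneg fun p _ => mul_self_nonneg _
  have hgle : ∀ (x : S × A → ℝ) (j : ℕ),
      β⁻¹ ^ (2 * j) * ((B ^ j).mulVec x ⬝ᵥ (B ^ j).mulVec x) ≤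
        ((Fintype.card (S × A) : ℝ) * (∑ q : S × A, |x q|) ^ 2) * r ^ j := by
    intro x j
    have hdot : (B ^ j).mulVec x ⬝ᵥ (B ^ j).mulVec x ≤
        (Fintype.card (S × A) : ℝ) * ((γ ^ j * ∑ q : S × A, |x q|) ^ 2) := by
      calc (B ^ j).mulVec x ⬝ᵥ (B ^ j).mulVec x
          = ∑ p : S × A, ((B ^ j).mulVec x p) * ((B ^ j).mulVec x p) := rfl
        _ ≤ ∑ _p : S × A, (γ ^ j * ∑ q : S × A, |x q|) ^ 2 := by
            refine Finset.sum_le_sum fun p _ => ?_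
            have := hmvb x j p
            calc ((B ^ j).mulVec x p) * ((B ^ j).mulVec x p)
                = |(B ^ j).mulVec x p| * |(B ^ j).mulVec x p| := (abs_mul_abs_self _).symm
              _ ≤ (γ ^ j * ∑ q : S × A, |x q|) * (γ ^ j * ∑ q : S × A, |x q|) :=
                  mul_le_mul this this (abs_nonneg _) ((abs_nonneg _).trans this)
              _ = (γ ^ j * ∑ q : S × A, |x q|) ^ 2 := (sq _).symm
        _ = (Fintype.card (S × A) : ℝ) * ((γ ^ j * ∑ q : S × A, |x q|) ^ 2) := by
            rw [Finset.sum_const, Finset.card_univ, nsmul_eq_mul]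
    calc β⁻¹ ^ (2 * j) * ((B ^ j).mulVec x ⬝ᵥ (B ^ j).mulVec x)
        ≤ β⁻¹ ^ (2 * j) * ((Fintype.card (S × A) : ℝ) *
            ((γ ^ j * ∑ q : S × A, |x q|) ^ 2)) :=
          mul_le_mul_of_nonneg_left hdot (by positivity)
      _ = ((Fintype.card (S × A) : ℝ) * (∑ q : S × A, |x q|) ^ 2) *
            (β⁻¹ ^ (2 * j) * (γ ^ j * γ ^ j)) := by ring
      _ = ((Fintype.card (S × A) : ℝ) * (∑ q : S × A, |x q|) ^ 2) * r ^ j := by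
          rw [hkey j]
  have hsum : ∀ x : S × A → ℝ,
      Summable (fun j : ℕ => β⁻¹ ^ (2 * j) * ((B ^ j).mulVec x ⬝ᵥ (B ^ j).mulVec x)) :=
    fun x => aux_summable_ratio hr0 hr1 _ (hg0 x) (hgle x)
  -- entrywise summability of the matrix series
  set Mk : ℕ → Matrix (S × A) (S × A) ℝ :=
    fun k => (β⁻¹ ^ (2 * k)) • ((B ^ k)ᵀ * B ^ k) with hMkdef
  have hMkent : ∀ (k : ℕ) (p q : S × A),
      Mk k p q = β⁻¹ ^ (2 * k) * ∑ s : S × A, (B ^ k) s p * (B ^ k) s q := by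
    intro k p q
    have h0 : Mk k p q = β⁻¹ ^ (2 * k) * ((B ^ k)ᵀ * B ^ k) p q := rfl
    rw [h0, Matrix.mul_apply]
    simp only [Matrix.transpose_apply]
  have hMkent_nonneg : ∀ (k : ℕ) (p q : S × A), 0 ≤ Mk k p q := by
    intro k p q
    rw [hMkent]
    apply mul_nonneg (by positivity)
    exact Finset.sum_nonneg fun s _ => mul_nonneg ((hBk k).1 s p) ((hBk k).1 s q)
  have hMkent_le : ∀ (k : ℕ) (p q : S × A),
      Mk k p q ≤ (Fintype.card (S × A) : ℝ) * r ^ k := by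
    intro k p q
    rw [hMkent]
    calc β⁻¹ ^ (2 * k) * ∑ s : S × A, (B ^ k) s p * (B ^ k) s q
        ≤ β⁻¹ ^ (2 * k) * ∑ _s : S × A, γ ^ k * γ ^ k := by
          refine mul_le_mul_of_nonneg_left (Finset.sum_le_sum fun s _ => ?_) (by positivity)
          exact mul_le_mul (hBent k s p) (hBent k s q) ((hBk k).1 s q) (by positivity)
      _ = (Fintype.card (S × A) : ℝ) * (β⁻¹ ^ (2 * k) * (γ ^ k * γ ^ k)) := by
          rw [Finset.sum_const, Finset.card_univ, nsmul_eq_mul]; ring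
      _ = (Fintype.card (S × A) : ℝ) * r ^ k := by rw [hkey k]
  have hMksum : ∀ p q : S × A, Summable (fun k => Mk k p q) :=
    fun p q => aux_summable_ratio hr0 hr1 _ (fun k => hMkent_nonneg k p q)
      (fun k => hMkent_le k p q)
  have hMsum : Summable Mk := by
    exact Pi.summable.2 fun p => Pi.summable.2 fun q => hMksum p q
  have hMapply : ∀ p q : S × A, M p q = ∑' k : ℕ, Mk k p q := by
    intro p q
    have h1 : HasSum Mk M := by rw [hM]; exact hMsum.hasSum
    have h2 : HasSum (fun k => Mk k p q) (M p q) := by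
      have := Pi.hasSum.1 h1 p
      exact Pi.hasSum.1 this q
    exact h2.tsum_eq.symm
  -- the quadratic form
  have hquad : ∀ x : S × A → ℝ, x ⬝ᵥ M.mulVec x =
      ∑' j : ℕ, β⁻¹ ^ (2 * j) * ((B ^ j).mulVec x ⬝ᵥ (B ^ j).mulVec x) := by
    intro x
    have h1 : x ⬝ᵥ M.mulVec x = ∑ p : S × A, ∑ q : S × A, M p q * (x p * x q) := by
      simp only [dotProduct, Matrix.mulVec, Finset.mul_sum]
      exact Finset.sum_congr rfl fun p _ => Finset.sum_congr rfl fun q _ => by ring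
    have h2 : ∀ p q : S × A, M p q * (x p * x q) = ∑' k : ℕ, Mk k p q * (x p * x q) := by
      intro p q
      rw [hMapply p q, ← tsum_mul_right]
    have h3 : ∀ k : ℕ, (∑ p : S × A, ∑ q : S × A, Mk k p q * (x p * x q))
        = β⁻¹ ^ (2 * k) * ((B ^ k).mulVec x ⬝ᵥ (B ^ k).mulVec x) := by
      intro k
      have : (∑ p : S × A, ∑ q : S × A, Mk k p q * (x p * x q)) = x ⬝ᵥ (Mk k).mulVec x := by
        simp only [dotProduct, Matrix.mulVec, Finset.mul_sum]
        exact Finset.sum_congr rfl fun p _ => Finset.sum_congr rfl fun q _ => by ring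
      rw [this, hMkdef]
      rw [Matrix.smul_mulVec, dotProduct_smul, smul_eq_mul]
      congr 1
      rw [← Matrix.mulVec_mulVec, Matrix.dotProduct_mulVec, Matrix.vecMul_transpose]
    rw [h1]
    have hsummand : ∀ p : S × A, ∀ q : S × A,
        Summable (fun k : ℕ => Mk k p q * (x p * x q)) :=
      fun p q => (hMksum p q).mul_right _
    calc ∑ p : S × A, ∑ q : S × A, M p q * (x p * x q)
        = ∑ p : S × A, ∑ q : S × A, ∑' k : ℕ, Mk k p q * (x p * x q) := by
          exact Finset.sum_congr rfl fun p _ => Finset.sum_congr rfl fun q _ => h2 p q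
      _ = ∑ p : S × A, ∑' k : ℕ, ∑ q : S × A, Mk k p q * (x p * x q) := by
          refine Finset.sum_congr rfl fun p _ => ?_
          exact (Summable.tsum_finsetSum fun q _ => hsummand p q).symm
      _ = ∑' k : ℕ, ∑ p : S × A, ∑ q : S × A, Mk k p q * (x p * x q) := by
          refine (Summable.tsum_finsetSum fun p _ => ?_).symm
          exact (summable_sum fun q _ => hsummand p q)
      _ = ∑' k : ℕ, β⁻¹ ^ (2 * k) * ((B ^ k).mulVec x ⬝ᵥ (B ^ k).mulVec x) := by
          exact tsum_congr h3
  -- Bellman one-step facts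
  have hbell : ∀ Q : S × A → ℝ, Q ≤ Qstar →
      bellman γ P R Q ≤ Qstar ∧
      ∀ p : S × A, Qstar p - bellman γ P R Q p ≤
        B.mulVec (fun q => Qstar q - Q q) p := by
    intro Q hQ
    have hsup : ∀ s' : S,
        Finset.univ.sup' Finset.univ_nonempty (fun a' => Q (s', a')) ≤
        Finset.univ.sup' Finset.univ_nonempty (fun a' => Qstar (s', a')) :=
      fun s' => Finset.sup'_mono_fun (fun a _ => hQ (s', a))
    constructor
    · intro p
      conv_rhs => rw [← hfix]
      simp only [bellman]
      apply add_le_add le_rfl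
      apply mul_le_mul_of_nonneg_left _ hγ0
      exact Finset.sum_le_sum fun s' _ =>
        mul_le_mul_of_nonneg_left (hsup s') (hP0 _ _ _)
    · intro p
      have hBmv : B.mulVec (fun q => Qstar q - Q q) p
          = γ * ∑ s' : S, P p.1 p.2 s' * (Qstar (s', πstar s') - Q (s', πstar s')) := by
        simp only [Matrix.mulVec, dotProduct, hBdef, polMat, Matrix.of_apply]
        rw [Fintype.sum_prod_type, Finset.mul_sum]
        refine Finset.sum_congr rfl fun s' _ => ?_
        simp only [ite_mul, zero_mul]
        rw [Finset.sum_ite_eq' Finset.univ (πstar s')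
          (fun a' => γ * P p.1 p.2 s' * (Qstar (s', a') - Q (s', a')))]
        simp [mul_assoc]
      have key : ∀ s' : S,
          Finset.univ.sup' Finset.univ_nonempty (fun a' => Qstar (s', a')) -
          Finset.univ.sup' Finset.univ_nonempty (fun a' => Q (s', a')) ≤
            Qstar (s', πstar s') - Q (s', πstar s') := by
        intro s'
        have h1 := hgreedy s'
        have h2 : Q (s', πstar s') ≤
            Finset.univ.sup' Finset.univ_nonempty (fun a' => Q (s', a')) :=
          Finset.le_sup' (fun a' => Q (s', a')) (Finset.mem_univ (πstar s'))
        linarith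
      have hdiff : Qstar p - bellman γ P R Q p
          = γ * ∑ s' : S, P p.1 p.2 s' *
              (Finset.univ.sup' Finset.univ_nonempty (fun a' => Qstar (s', a')) -
               Finset.univ.sup' Finset.univ_nonempty (fun a' => Q (s', a'))) := by
        conv_lhs => rw [← hfix]
        simp only [bellman]
        rw [Finset.sum_congr rfl (fun s' _ => mul_sub (P p.1 p.2 s') _ _),
          Finset.sum_sub_distrib]
        ring
      rw [hdiff, hBmv]
      apply mul_le_mul_of_nonneg_left _ hγ0
      exact Finset.sum_le_sum fun s' _ =>
        mul_le_mul_of_nonneg_left (key s') (hP0 _ _ _)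
  -- iteration
  set e₀ : S × A → ℝ := fun q => Qstar q - Q₀ q with he₀def
  have hiter : ∀ k : ℕ, (bellman γ P R)^[k] Q₀ ≤ Qstar ∧
      ∀ p : S × A, Qstar p - (bellman γ P R)^[k] Q₀ p ≤ (B ^ k).mulVec e₀ p := by
    intro k
    induction k with
    | zero =>
      refine ⟨hQ₀, fun p => ?_⟩
      simp [Matrix.one_mulVec, he₀def]
    | succ n ih =>
      obtain ⟨ih1, ih2⟩ := ih
      have h := hbell _ ih1
      rw [Function.iterate_succ_apply']
      refine ⟨h.1, fun p => ?_⟩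
      calc Qstar p - bellman γ P R ((bellman γ P R)^[n] Q₀) p
          ≤ B.mulVec (fun q => Qstar q - (bellman γ P R)^[n] Q₀ q) p := h.2 p
        _ ≤ B.mulVec ((B ^ n).mulVec e₀) p := by
            simp only [Matrix.mulVec, dotProduct]
            exact Finset.sum_le_sum fun q _ =>
              mul_le_mul_of_nonneg_left (ih2 q) (hB0 p q)
        _ = (B ^ (n + 1)).mulVec e₀ p := by
            rw [Matrix.mulVec_mulVec, ← pow_succ']
  -- main estimate
  intro k
  set Qk : S × A → ℝ := (bellman γ P R)^[k] Q₀ with hQkdef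
  set u : S × A → ℝ := fun p => Qstar p - Qk p with hudef
  have hu0 : ∀ p, 0 ≤ u p := fun p => sub_nonneg.2 ((hiter k).1 p)
  have huB : ∀ p, u p ≤ (B ^ k).mulVec e₀ p := (hiter k).2
  have he₀0 : ∀ p, 0 ≤ e₀ p := fun p => sub_nonneg.2 (hQ₀ p)
  -- rewrite the dot products
  have hlhs : (Qk - Qstar) ⬝ᵥ M.mulVec (Qk - Qstar) = u ⬝ᵥ M.mulVec u := by
    have : Qk - Qstar = -u := by funext p; simp [hudef]
    rw [this, Matrix.mulVec_neg, dotProduct_neg, neg_dotProduct, neg_neg]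
  have hrhs : (Q₀ - Qstar) ⬝ᵥ M.mulVec (Q₀ - Qstar) = e₀ ⬝ᵥ M.mulVec e₀ := by
    have : Q₀ - Qstar = -e₀ := by funext p; simp [he₀def]
    rw [this, Matrix.mulVec_neg, dotProduct_neg, neg_dotProduct, neg_neg]
  -- pointwise comparison of the series terms
  have hterm : ∀ j : ℕ,
      β⁻¹ ^ (2 * j) * ((B ^ j).mulVec u ⬝ᵥ (B ^ j).mulVec u) ≤
      β ^ (2 * k) * (β⁻¹ ^ (2 * (j + k)) *
        ((B ^ (j + k)).mulVec e₀ ⬝ᵥ (B ^ (j + k)).mulVec e₀)) := by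
    intro j
    have hmv : ∀ p, (B ^ j).mulVec u p ≤ (B ^ (j + k)).mulVec e₀ p := by
      intro p
      calc (B ^ j).mulVec u p ≤ (B ^ j).mulVec ((B ^ k).mulVec e₀) p := by
            simp only [Matrix.mulVec, dotProduct]
            exact Finset.sum_le_sum fun q _ =>
              mul_le_mul_of_nonneg_left (huB q) ((hBk j).1 p q)
        _ = (B ^ (j + k)).mulVec e₀ p := by rw [Matrix.mulVec_mulVec, ← pow_add]
    have hmv0 : ∀ p, 0 ≤ (B ^ j).mulVec u p := by
      intro p
      simp only [Matrix.mulVec, dotProduct]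
      exact Finset.sum_nonneg fun q _ => mul_nonneg ((hBk j).1 p q) (hu0 q)
    have hdotle := aux_dot_sq_mono hmv0 hmv
    have hcoef : β ^ (2 * k) * β⁻¹ ^ (2 * (j + k)) = β⁻¹ ^ (2 * j) := by
      rw [show 2 * (j + k) = 2 * j + 2 * k by ring, pow_add]
      rw [inv_pow, inv_pow, ← mul_assoc, mul_comm (β ^ (2 * k)),
        mul_assoc, mul_inv_cancel₀ (by positivity), mul_one]
    calc β⁻¹ ^ (2 * j) * ((B ^ j).mulVec u ⬝ᵥ (B ^ j).mulVec u)
        ≤ β⁻¹ ^ (2 * j) * ((B ^ (j + k)).mulVec e₀ ⬝ᵥ (B ^ (j + k)).mulVec e₀) :=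
          mul_le_mul_of_nonneg_left hdotle (by positivity)
      _ = β ^ (2 * k) * (β⁻¹ ^ (2 * (j + k)) *
            ((B ^ (j + k)).mulVec e₀ ⬝ᵥ (B ^ (j + k)).mulVec e₀)) := by
          rw [← mul_assoc, hcoef]
  -- summability of the shifted series
  set G : ℕ → ℝ :=
    fun i => β⁻¹ ^ (2 * i) * ((B ^ i).mulVec e₀ ⬝ᵥ (B ^ i).mulVec e₀) with hGdef
  have hGsum : Summable G := hsum e₀
  have hGshift : Summable (fun j => G (j + k)) := (summable_nat_add_iff k).2 hGsum
  -- the chain of inequalities on the quadratic forms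
  have hchain : u ⬝ᵥ M.mulVec u ≤ β ^ (2 * k) * (e₀ ⬝ᵥ M.mulVec e₀) := by
    rw [hquad u, hquad e₀]
    calc ∑' j : ℕ, β⁻¹ ^ (2 * j) * ((B ^ j).mulVec u ⬝ᵥ (B ^ j).mulVec u)
        ≤ ∑' j : ℕ, β ^ (2 * k) * G (j + k) := by
          refine Summable.tsum_le_tsum hterm (hsum u) ?_
          exact hGshift.mul_left _
      _ = β ^ (2 * k) * ∑' j : ℕ, G (j + k) := tsum_mul_left
      _ ≤ β ^ (2 * k) * ∑' i : ℕ, G i := by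
          refine mul_le_mul_of_nonneg_left ?_ (by positivity)
          exact Summable.tsum_le_tsum_of_inj (fun j => j + k)
            (add_left_injective k)
            (fun c _ => hg0 e₀ c)
            (fun j => le_refl _)
            hGshift hGsum
  -- conclude with square roots
  rw [hlhs, hrhs]
  have h1 : Real.sqrt (u ⬝ᵥ M.mulVec u) ≤
      Real.sqrt (β ^ (2 * k) * (e₀ ⬝ᵥ M.mulVec e₀)) := Real.sqrt_le_sqrt hchain
  have h2 : Real.sqrt (β ^ (2 * k) * (e₀ ⬝ᵥ M.mulVec e₀))
      = β ^ k * Real.sqrt (e₀ ⬝ᵥ M.mulVec e₀) := by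
    rw [Real.sqrt_mul (by positivity)]
    congr 1
    rw [show 2 * k = k * 2 by ring, pow_mul, Real.sqrt_sq (by positivity)]
  calc Real.sqrt (u ⬝ᵥ M.mulVec u)
      ≤ Real.sqrt (β ^ (2 * k) * (e₀ ⬝ᵥ M.mulVec e₀)) := h1
    _ = β ^ k * Real.sqrt (e₀ ⬝ᵥ M.mulVec e₀) := h2
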